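/- Let F = (f_1,…,f_N) be a frame for an n-dimensional complex inner product space H that admits a 1-uniform dual, i.e., there exists a dual frame G₀ of F with ⟨f_i, (g₀)_i⟩ = n/N for all i, and let p > 1. Then a dual frame G of F is 1-erasure spectrally optimal (i.e., AE_R^{(1),p}(F,G) ≤ AE_R^{(1),p}(F,G') for every dual frame G' of F) if and only if ⟨f_i, g_i⟩ = n/N for all 1 ≤ i ≤ N, i.e., if and only if G is a 1-uniform dual of F. -/

import Mathlib

open scoped ComplexInnerProductSpace


/-- Tangent line inequality for `t ↦ t ^ p` at `c`. -/
lemma tangent_le' {p c t : ℝ} (hp : 1 < p) (hc : 0 < c) (ht : 0 ≤ t) :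
    c ^ p + p * c ^ (p - 1) * (t - c) ≤ t ^ p := by
  set s : ℝ := t / c - 1 with hs_def
  have hs : -1 ≤ s := by
    have : 0 ≤ t / c := div_nonneg ht hc.le
    simp [hs_def]; linarith
  have hb := one_add_mul_self_le_rpow_one_add hs hp.le
  have h1s : (1 : ℝ) + s = t / c := by ring
  have ht' : t = c * (1 + s) := by rw [h1s]; field_simp
  have hcp : c ^ (p - 1) = c ^ p / c := by rw [Real.rpow_sub hc, Real.rpow_one]
  have hmul : t ^ p = c ^ p * (1 + s) ^ p := by
    rw [ht', Real.mul_rpow hc.le (by linarith)]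
  have hcpos : (0:ℝ) < c ^ p := Real.rpow_pos_of_pos hc _
  rw [hmul, hcp]
  have key : c ^ p * (1 + p * s) ≤ c ^ p * (1 + s) ^ p :=
    mul_le_mul_of_nonneg_left hb hcpos.le
  have : c ^ p + p * (c ^ p / c) * (t - c) = c ^ p * (1 + p * s) := by
    have hcs : c * s = t - c := by rw [hs_def]; field_simp
    field_simp [hs_def]; linear_combination (-p) * hcs
  rw [this]; exact key

lemma tangent_eq' {p c t : ℝ} (hp : 1 < p) (hc : 0 < c) (ht : 0 ≤ t)
    (heq : t ^ p ≤ c ^ p + p * c ^ (p - 1) * (t - c)) : t = c := by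
  by_contra hne
  set s : ℝ := t / c - 1 with hs_def
  have hs : -1 ≤ s := by
    have : 0 ≤ t / c := div_nonneg ht hc.le
    simp [hs_def]; linarith
  have hs' : s ≠ 0 := by
    simp only [hs_def, sub_ne_zero]
    intro h; apply hne; field_simp at h; linarith
  have hb := one_add_mul_self_lt_rpow_one_add hs hs' hp
  have h1s : (1 : ℝ) + s = t / c := by ring
  have ht' : t = c * (1 + s) := by rw [h1s]; field_simp
  have hcp : c ^ (p - 1) = c ^ p / c := by rw [Real.rpow_sub hc, Real.rpow_one]
  have hmul : t ^ p = c ^ p * (1 + s) ^ p := by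
    rw [ht', Real.mul_rpow hc.le (by linarith)]
  have hcpos : (0:ℝ) < c ^ p := Real.rpow_pos_of_pos hc _
  have key : c ^ p * (1 + p * s) < c ^ p * (1 + s) ^ p :=
    mul_lt_mul_of_pos_left hb hcpos
  have h2 : c ^ p + p * c ^ (p - 1) * (t - c) = c ^ p * (1 + p * s) := by
    have hcs : c * s = t - c := by rw [hs_def]; field_simp
    rw [hcp]; field_simp [hs_def]; linear_combination (-p) * hcs
  rw [hmul, h2] at heq; linarith

lemma trace_sum' {H : Type*} [NormedAddCommGroup H] [InnerProductSpace ℂ H]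
    [FiniteDimensional ℂ H] {n N : ℕ} (hn : Module.finrank ℂ H = n)
    (f g : Fin N → H) (hdual : ∀ x : H, x = ∑ i, ⟪f i, x⟫ • g i) :
    ∑ i, ⟪g i, f i⟫ = (n : ℂ) := by
  let b := (stdOrthonormalBasis ℂ H).reindex (finCongr hn)
  have key : ∑ i, ⟪f i, g i⟫ = (n : ℂ) := by
    calc ∑ i, ⟪f i, g i⟫ = ∑ i, ∑ j, ⟪f i, b j⟫ * ⟪b j, g i⟫ := by
          refine Finset.sum_congr rfl fun i _ => ?_
          exact (b.sum_inner_mul_inner _ _).symm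
      _ = ∑ j, ∑ i, ⟪f i, b j⟫ * ⟪b j, g i⟫ := Finset.sum_comm
      _ = ∑ j, ⟪b j, ∑ i, ⟪f i, b j⟫ • g i⟫ := by
          simp [inner_sum, inner_smul_right, mul_comm]
      _ = ∑ j : Fin n, ⟪b j, b j⟫ := by
          refine Finset.sum_congr rfl fun j _ => ?_
          rw [← hdual (b j)]
      _ = (n : ℂ) := by
          have := orthonormal_iff_ite.mp b.orthonormal
          simp [this]
  have h2 : ∑ i, ⟪g i, f i⟫ = (starRingEnd ℂ) (∑ i, ⟪f i, g i⟫) := by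
    rw [map_sum]; exact Finset.sum_congr rfl fun i _ => (inner_conj_symm _ _).symm
  rw [h2, key]; simp

/-- Lower bound: if complex numbers sum to `n`, the `p`-sum of their norms is at
least `N * (n/N)^p`. -/
lemma sum_norm_rpow_ge {p : ℝ} (hp : 1 < p) {N n : ℕ} (hN : 0 < N) (hn : 0 < n)
    (a : Fin N → ℂ) (ha : ∑ i, a i = (n : ℂ)) :
    (N : ℝ) * ((n : ℝ) / N) ^ p ≤ ∑ i, ‖a i‖ ^ p := by
  set c : ℝ := (n : ℝ) / N with hc_def
  have hc : 0 < c := div_pos (by exact_mod_cast hn) (by exact_mod_cast hN)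
  set slope : ℝ := p * c ^ (p - 1) with hslope_def
  have hslope : 0 < slope := mul_pos (by linarith) (Real.rpow_pos_of_pos hc _)
  have hS : (n : ℝ) ≤ ∑ i, ‖a i‖ := by
    calc (n : ℝ) = ‖(n : ℂ)‖ := by simp
      _ = ‖∑ i, a i‖ := by rw [ha]
      _ ≤ ∑ i, ‖a i‖ := norm_sum_le _ _
  have hNc : (N : ℝ) * c = n := by rw [hc_def]; field_simp
  have hexp : ∑ i, (c ^ p + slope * (‖a i‖ - c)) =
      (N : ℝ) * c ^ p + slope * ((∑ i, ‖a i‖) - n) := by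
    rw [Finset.sum_add_distrib, Finset.sum_const, Finset.card_univ, Fintype.card_fin,
      ← Finset.mul_sum, Finset.sum_sub_distrib, Finset.sum_const, Finset.card_univ,
      Fintype.card_fin, nsmul_eq_mul, nsmul_eq_mul, hNc]
  have hle : ∑ i, (c ^ p + slope * (‖a i‖ - c)) ≤ ∑ i, ‖a i‖ ^ p :=
    Finset.sum_le_sum fun i _ => tangent_le' hp hc (norm_nonneg _)
  have hnn : 0 ≤ slope * ((∑ i, ‖a i‖) - n) :=
    mul_nonneg hslope.le (by linarith)
  rw [hexp] at hle; linarith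

/-- Equality case. -/
lemma sum_norm_rpow_eq {p : ℝ} (hp : 1 < p) {N n : ℕ} (hN : 0 < N) (hn : 0 < n)
    (a : Fin N → ℂ) (ha : ∑ i, a i = (n : ℂ))
    (hle : ∑ i, ‖a i‖ ^ p ≤ (N : ℝ) * ((n : ℝ) / N) ^ p) :
    ∀ i, a i = (((n : ℝ) / N : ℝ) : ℂ) := by
  set c : ℝ := (n : ℝ) / N with hc_def
  have hc : 0 < c := div_pos (by exact_mod_cast hn) (by exact_mod_cast hN)
  set slope : ℝ := p * c ^ (p - 1) with hslope_def
  have hslope : 0 < slope := mul_pos (by linarith) (Real.rpow_pos_of_pos hc _)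
  have hS : (n : ℝ) ≤ ∑ i, ‖a i‖ := by
    calc (n : ℝ) = ‖(n : ℂ)‖ := by simp
      _ = ‖∑ i, a i‖ := by rw [ha]
      _ ≤ ∑ i, ‖a i‖ := norm_sum_le _ _
  have hNc : (N : ℝ) * c = n := by rw [hc_def]; field_simp
  have hexp : ∑ i, (c ^ p + slope * (‖a i‖ - c)) =
      (N : ℝ) * c ^ p + slope * ((∑ i, ‖a i‖) - n) := by
    rw [Finset.sum_add_distrib, Finset.sum_const, Finset.card_univ, Fintype.card_fin,
      ← Finset.mul_sum, Finset.sum_sub_distrib, Finset.sum_const, Finset.card_univ,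
      Fintype.card_fin, nsmul_eq_mul, nsmul_eq_mul, hNc]
  have htang : ∑ i, (c ^ p + slope * (‖a i‖ - c)) ≤ ∑ i, ‖a i‖ ^ p :=
    Finset.sum_le_sum fun i _ => tangent_le' hp hc (norm_nonneg _)
  rw [hexp] at htang
  have h0 : slope * ((∑ i, ‖a i‖) - n) = 0 := by
    have h1 : 0 ≤ slope * ((∑ i, ‖a i‖) - n) := mul_nonneg hslope.le (by linarith)
    linarith
  have hSn : ∑ i, ‖a i‖ = n := by
    rcases mul_eq_zero.mp h0 with h | h
    · exact absurd h hslope.ne'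
    · linarith
  -- each norm equals c
  have hnorm : ∀ i, ‖a i‖ = c := by
    have hzero : ∑ i, (‖a i‖ ^ p - (c ^ p + slope * (‖a i‖ - c))) = 0 := by
      rw [Finset.sum_sub_distrib, hexp, hSn]
      have : ∑ i, ‖a i‖ ^ p = (N : ℝ) * c ^ p := by linarith
      rw [this]; ring
    have heach := (Finset.sum_eq_zero_iff_of_nonneg
      (fun i _ => sub_nonneg.mpr (tangent_le' hp hc (norm_nonneg (a i))))).mp hzero
    intro i
    have := heach i (Finset.mem_univ i)
    exact tangent_eq' hp hc (norm_nonneg _) (by linarith [sub_eq_zero.mp this])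
  -- real parts
  have hre_sum : ∑ i, (a i).re = n := by
    have := congrArg Complex.re ha
    simpa [Complex.re_sum] using this
  have hre : ∀ i, (a i).re = c := by
    have hzero : ∑ i, (c - (a i).re) = 0 := by
      rw [Finset.sum_sub_distrib, Finset.sum_const, Finset.card_univ, Fintype.card_fin,
        nsmul_eq_mul, hNc, hre_sum]; ring
    have heach := (Finset.sum_eq_zero_iff_of_nonneg
      (fun i _ => by
        have h1 : (a i).re ≤ ‖a i‖ := Complex.re_le_norm (a i)
        rw [hnorm i] at h1
        linarith)).mp hzero
    intro i
    have := heach i (Finset.mem_univ i)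
    linarith [sub_eq_zero.mp this]
  intro i
  have him : (a i).im = 0 := by
    have h1 : ‖a i‖ ^ 2 = (a i).re ^ 2 + (a i).im ^ 2 := by
      rw [Complex.sq_norm, Complex.normSq_apply]; ring
    rw [hnorm i, hre i] at h1
    have : (a i).im ^ 2 = 0 := by linarith
    exact pow_eq_zero_iff two_ne_zero |>.mp this
  apply Complex.ext
  · rw [hre i, Complex.ofReal_re]
  · rw [him, Complex.ofReal_im]

/-- Let `F` be a frame for an `n`-dimensional complex inner
product space `H` that admits a `1`-uniform dual `G₀` (a dual frame with
`⟨f i, (g₀) i⟩ = n/N` for all `i`), and let `p > 1`.  Then a dual frame `G` of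
`F` is `1`-erasure spectrally optimal (minimizes
`AE_R^{(1),p}(F,·) = ((1/N) ∑ i, |⟨f i, · i⟩|^p)^(1/p)` among all duals) iff
`⟨f i, g i⟩ = n/N` for all `i`, i.e. iff `G` is a `1`-uniform dual of `F`. -/
theorem stmt_13 {H : Type*} [NormedAddCommGroup H] [InnerProductSpace ℂ H]
    [FiniteDimensional ℂ H] (n N : ℕ) (hn : Module.finrank ℂ H = n)
    (f : Fin N → H)
    (hframe : Submodule.span ℂ (Set.range f) = ⊤)
    (g₀ : Fin N → H)
    (hdual₀ : ∀ x : H, x = ∑ i, ⟪f i, x⟫ • g₀ i)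
    (hunif₀ : ∀ i, ⟪g₀ i, f i⟫ = (n : ℂ) / N)
    (p : ℝ) (hp : 1 < p)
    (g : Fin N → H)
    (hdual : ∀ x : H, x = ∑ i, ⟪f i, x⟫ • g i) :
    (∀ g' : Fin N → H, (∀ x : H, x = ∑ i, ⟪f i, x⟫ • g' i) →
        ((1 / (N : ℝ)) * ∑ i, ‖⟪g i, f i⟫‖ ^ p) ^ (1 / p) ≤
          ((1 / (N : ℝ)) * ∑ i, ‖⟪g' i, f i⟫‖ ^ p) ^ (1 / p)) ↔
      ∀ i, ⟪g i, f i⟫ = (n : ℂ) / N := by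
  have hp0 : (0:ℝ) < p := by linarith
  rcases Nat.eq_zero_or_pos N with hN | hN
  · subst hN
    constructor
    · intro _ i; exact i.elim0
    · intro _ g' _; simp
  rcases Nat.eq_zero_or_pos n with hn0 | hn0
  · subst hn0
    have hsub : Subsingleton H := Module.finrank_zero_iff.mp hn
    have hf0 : ∀ i, f i = 0 := fun i => Subsingleton.elim _ _
    constructor
    · intro _ i
      rw [hf0 i, inner_zero_right]
      simp
    · intro _ g' _
      simp [hf0]
  -- main case
  have hNR : (0:ℝ) < N := by exact_mod_cast hN
  set c : ℝ := (n : ℝ) / N with hc_def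
  have hc : 0 < c := div_pos (by exact_mod_cast hn0) hNR
  have hcast : ((n : ℂ) / N) = ((c : ℝ) : ℂ) := by push_cast [hc_def]; ring
  have hnormc : ‖((c : ℝ) : ℂ)‖ = c := by
    rw [Complex.norm_real, Real.norm_of_nonneg hc.le]
  have hsum₀ : ∑ i, ‖⟪g₀ i, f i⟫‖ ^ p = (N : ℝ) * c ^ p := by
    rw [Finset.sum_congr rfl fun i _ => by rw [hunif₀ i, hcast, hnormc]]
    rw [Finset.sum_const, Finset.card_univ, Fintype.card_fin, nsmul_eq_mul]
  constructor
  · -- optimal → uniform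
    intro hopt
    have h := hopt g₀ hdual₀
    rw [hsum₀] at h
    -- undo the outer rpow
    have hA : 0 ≤ (1 / (N : ℝ)) * ∑ i, ‖⟪g i, f i⟫‖ ^ p :=
      mul_nonneg (by positivity) (Finset.sum_nonneg fun i _ =>
        Real.rpow_nonneg (norm_nonneg _) _)
    have hB : 0 ≤ (1 / (N : ℝ)) * ((N : ℝ) * c ^ p) := by positivity
    have hAB : (1 / (N : ℝ)) * ∑ i, ‖⟪g i, f i⟫‖ ^ p ≤ (1 / (N : ℝ)) * ((N : ℝ) * c ^ p) := by
      have h2 := Real.rpow_le_rpow (Real.rpow_nonneg hA _) h hp0.le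
      rwa [← Real.rpow_mul hA, ← Real.rpow_mul hB, one_div_mul_cancel hp0.ne',
        Real.rpow_one, Real.rpow_one] at h2
    have hsums : ∑ i, ‖⟪g i, f i⟫‖ ^ p ≤ (N : ℝ) * c ^ p := by
      have := (mul_le_mul_iff_right₀ (by positivity : (0:ℝ) < 1 / N)).mp hAB
      exact this
    have ha : ∑ i, ⟪g i, f i⟫ = (n : ℂ) := trace_sum' hn f g hdual
    have := sum_norm_rpow_eq hp hN hn0 (fun i => ⟪g i, f i⟫) ha hsums
    intro i
    rw [hcast]
    exact this i
  · -- uniform → optimal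
    intro hg g' hdual'
    have hsum : ∑ i, ‖⟪g i, f i⟫‖ ^ p = (N : ℝ) * c ^ p := by
      rw [Finset.sum_congr rfl fun i _ => by rw [hg i, hcast, hnormc]]
      rw [Finset.sum_const, Finset.card_univ, Fintype.card_fin, nsmul_eq_mul]
    have ha' : ∑ i, ⟪g' i, f i⟫ = (n : ℂ) := trace_sum' hn f g' hdual'
    have hge := sum_norm_rpow_ge hp hN hn0 (fun i => ⟪g' i, f i⟫) ha'
    apply Real.rpow_le_rpow
    · rw [hsum]; positivity
    · rw [hsum]
      exact mul_le_mul_of_nonneg_left hge (by positivity)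
    · positivity
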